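/- Let m ∈ ℕ, m ≥ 2, β = 1/m, and p ∈ [0, β). Let (B_i)_{i≥1} be i.i.d. Bernoulli(p) and τ := inf{n ≥ 1 : (1/n)Σ_{i=1}^n B_i > β}. Then P(τ < ∞) = p(m-1)/(1-p). -/

import Mathlib

open MeasureTheory ProbabilityTheory

namespace Stmt9

open Filter Finset Topology

noncomputable section
open scoped Classical

def cnt (b : ℕ → Bool) (n : ℕ) : ℕ := ∑ i ∈ Finset.range n, (if b i then 1 else 0)
def w (m : ℕ) (b : ℕ → Bool) (n : ℕ) : ℤ := (m : ℤ) * cnt b n - n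
def Rec (m : ℕ) (b : ℕ → Bool) (k : ℕ) : Prop := ∀ n, k < n → w m b n < w m b k
def recCount (m : ℕ) (b : ℕ → Bool) (N : ℕ) : ℕ :=
  ((Finset.range N).filter (Rec m b)).card
def shiftSeq (k : ℕ) (b : ℕ → Bool) : ℕ → Bool := fun i => b (k + i)
def BadSet (m : ℕ) : Set (ℕ → Bool) := {b | ∀ n, 1 ≤ n → w m b n ≤ 0}
def NegSet (m : ℕ) : Set (ℕ → Bool) := {b | ∀ n, 1 ≤ n → w m b n < 0}
def pcyl (n : ℕ) (g : ℕ → Bool) : Set (ℕ → Bool) := {b | ∀ i, i < n → b i = g i}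
def pcylSys : Set (Set (ℕ → Bool)) := {A | ∃ n g, A = pcyl n g}

lemma w_zero (m : ℕ) (b : ℕ → Bool) : w m b 0 = 0 := by simp [w, cnt]

lemma w_succ (m : ℕ) (b : ℕ → Bool) (n : ℕ) :
    w m b (n + 1) = w m b n + ((if b n then (m : ℤ) else 0) - 1) := by
  simp only [w, cnt, Finset.sum_range_succ]
  push_cast
  split <;> ring

lemma cnt_shift (k : ℕ) (b : ℕ → Bool) (n : ℕ) :
    cnt b (k + n) = cnt b k + cnt (shiftSeq k b) n := by
  induction n with
  | zero => simp [cnt]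
  | succ n ih =>
    have h1 : k + (n + 1) = (k + n) + 1 := by omega
    rw [h1]
    simp only [cnt, Finset.sum_range_succ] at *
    rw [ih]
    simp only [shiftSeq, add_assoc]
    congr

lemma w_shift (m k : ℕ) (b : ℕ → Bool) (n : ℕ) :
    w m (shiftSeq k b) n = w m b (k + n) - w m b k := by
  simp only [w, cnt_shift k b n]
  push_cast
  ring

lemma rec_iff_neg (m : ℕ) (b : ℕ → Bool) (k : ℕ) :
    Rec m b k ↔ shiftSeq k b ∈ NegSet m := by
  constructor
  · intro h n hn
    rw [w_shift]
    have := h (k + n) (by omega)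
    omega
  · intro h n hn
    have h2 := h (n - k) (by omega)
    rw [w_shift] at h2
    have h3 : k + (n - k) = n := by omega
    rw [h3] at h2
    omega

lemma neg_iff (m : ℕ) (hm : 1 ≤ m) (b : ℕ → Bool) :
    b ∈ NegSet m ↔ (b 0 = false ∧ shiftSeq 1 b ∈ BadSet m) := by
  have hw1 : w m b 1 = (if b 0 then (m:ℤ) else 0) - 1 := by
    have h := w_succ m b 0
    rw [w_zero] at h
    simpa using h
  constructor
  · intro h
    have h1 := h 1 le_rfl
    have hb0 : b 0 = false := by
      by_contra hb
      rw [Bool.not_eq_false] at hb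
      rw [hb] at hw1
      simp at hw1
      omega
    refine ⟨hb0, fun n hn => ?_⟩
    rw [w_shift]
    have := h (1 + n) (by omega)
    omega
  · rintro ⟨hb0, h⟩ n hn
    rw [hb0] at hw1
    simp at hw1
    rcases Nat.lt_or_ge n 2 with h2 | h2
    · have : n = 1 := by omega
      rw [this]; omega
    · have h3 := h (n - 1) (by omega)
      rw [w_shift] at h3
      have h4 : 1 + (n - 1) = n := by omega
      rw [h4] at h3
      omega

lemma w_succ_ge (m : ℕ) (b : ℕ → Bool) (n : ℕ) :
    w m b n - 1 ≤ w m b (n + 1) := by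
  rw [w_succ]
  have : (0:ℤ) ≤ (if b n then (m : ℤ) else 0) := by positivity
  omega

/-- crossing lemma: a walk that only goes down by 1 must hit every intermediate level -/
lemma crossing (m : ℕ) (b : ℕ → Bool) (v : ℤ) :
    ∀ n j, j ≤ n → v ≤ w m b j → w m b n < v → ∃ t, j ≤ t ∧ t ≤ n ∧ w m b t = v := by
  intro n
  induction n with
  | zero =>
    intro j hj h1 h2
    have hj0 : j = 0 := Nat.le_zero.mp hj
    subst hj0
    omega
  | succ n ih =>
    intro j hj h1 h2
    by_cases hn : w m b n < v
    · have hjn : j ≤ n := by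
        rcases Nat.lt_succ_iff_lt_or_eq.mp (Nat.lt_succ_of_le hj) with h | h
        · omega
        · exfalso; subst h; omega
      obtain ⟨t, ht1, ht2, ht3⟩ := ih j hjn h1 hn
      exact ⟨t, ht1, by omega, ht3⟩
    · push_neg at hn
      have := w_succ_ge m b n
      have hwn : w m b n = v := by omega
      refine ⟨n, ?_, by omega, hwn⟩
      by_contra h
      push_neg at h
      have : j = n + 1 := by omega
      subst this; omega

lemma exists_future_max {m : ℕ} {b : ℕ → Bool} (hbot : Tendsto (w m b) atTop atBot)
    (N : ℕ) : ∃ n₀, N ≤ n₀ ∧ ∀ j, N ≤ j → w m b j ≤ w m b n₀ := by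
  obtain ⟨N₁, hN₁⟩ := (tendsto_atBot.mp hbot (w m b N - 1)).exists_forall_of_atTop
  have hNF : N ∈ Finset.Icc N (max N N₁) := by
    rw [Finset.mem_Icc]; omega
  obtain ⟨n₀, hn₀F, hmax⟩ := (Finset.Icc N (max N N₁)).exists_max_image (w m b) ⟨N, hNF⟩
  refine ⟨n₀, (Finset.mem_Icc.mp hn₀F).1, ?_⟩
  intro j hj
  by_cases hjF : j ≤ max N N₁
  · exact hmax j (Finset.mem_Icc.mpr ⟨hj, hjF⟩)
  · have h1 : w m b j ≤ w m b N - 1 := hN₁ j (by omega)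
    have h2 := hmax N hNF
    omega

lemma recCount_eq {m : ℕ} {b : ℕ → Bool} (N G L : ℕ)
    (hG : ∀ j, w m b j ≤ w m b G) (hNL : N ≤ L)
    (hLmax : ∀ j, N ≤ j → w m b j ≤ w m b L) :
    (recCount m b N : ℤ) = w m b G - w m b L := by
  have key : recCount m b N = (Finset.Ioc (w m b L) (w m b G)).card := by
    refine Finset.card_bij (fun k _ => w m b k) ?_ ?_ ?_
    · intro k hk
      rw [Finset.mem_filter, Finset.mem_range] at hk
      obtain ⟨hkN, hRec⟩ := hk
      rw [Finset.mem_Ioc]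
      exact ⟨hRec L (by omega), hG k⟩
    · intro a1 h1 a2 h2 heq
      rw [Finset.mem_filter, Finset.mem_range] at h1 h2
      rcases lt_trichotomy a1 a2 with h | h | h
      · have := h1.2 a2 h; omega
      · exact h
      · have := h2.2 a1 h; omega
    · intro v hv
      rw [Finset.mem_Ioc] at hv
      obtain ⟨hvL, hvG⟩ := hv
      -- every visit to level v happens before time N
      have hvis : ∀ t, w m b t = v → t < N := by
        intro t ht
        by_contra h
        push_neg at h
        have := hLmax t h
        omega
      -- the level v is visited
      have hx : ∃ t₀, w m b t₀ = v := by
        have h1 : G ≤ max G N := le_max_left _ _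
        have h2 : w m b (max G N) < v := by
          have := hLmax (max G N) (le_max_right _ _); omega
        obtain ⟨t₀, _, _, ht₀⟩ := crossing m b v (max G N) G h1 hvG h2
        exact ⟨t₀, ht₀⟩
      obtain ⟨t₀, ht₀⟩ := hx
      set V : Finset ℕ := (Finset.range N).filter (fun t => w m b t = v) with hV
      have ht₀V : t₀ ∈ V := by
        rw [hV, Finset.mem_filter, Finset.mem_range]
        exact ⟨hvis t₀ ht₀, ht₀⟩
      have hVne : V.Nonempty := ⟨t₀, ht₀V⟩
      set K := V.max' hVne with hK
      have hKV : K ∈ V := V.max'_mem hVne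
      rw [hV, Finset.mem_filter, Finset.mem_range] at hKV
      have hRecK : Rec m b K := by
        intro n hn
        by_contra hc
        push_neg at hc
        rw [hKV.2] at hc
        have hne : w m b n ≠ v := by
          intro he
          have : n ∈ V := by
            rw [hV, Finset.mem_filter, Finset.mem_range]
            exact ⟨hvis n he, he⟩
          have := V.le_max' n this
          omega
        have hgt : v < w m b n := lt_of_le_of_ne hc (Ne.symm hne)
        have h2 : w m b (max n N) < v := by
          have := hLmax (max n N) (le_max_right _ _); omega
        obtain ⟨t, htn, _, htv⟩ := crossing m b v (max n N) n (le_max_left _ _) hgt.le h2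
        have : t ∈ V := by
          rw [hV, Finset.mem_filter, Finset.mem_range]
          exact ⟨hvis t htv, htv⟩
        have := V.le_max' t this
        omega
      refine ⟨K, ?_, hKV.2⟩
      rw [Finset.mem_filter, Finset.mem_range]
      exact ⟨hKV.1, hRecK⟩
  rw [key, Int.card_Ioc]
  have : w m b L ≤ w m b G := hG L
  omega

lemma w_tendsto_atBot {m : ℕ} {b : ℕ → Bool} {c : ℝ}
    (hc : Tendsto (fun n => (w m b n : ℝ) / n) atTop (𝓝 c)) (hc0 : c < 0) :
    Tendsto (w m b) atTop atBot := by
  rw [← tendsto_intCast_atBot_iff (R := ℝ)]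
  have h1 : ∀ᶠ n : ℕ in atTop, ((w m b n : ℝ)) ≤ (n : ℝ) * (c / 2) := by
    have hev : ∀ᶠ n : ℕ in atTop, (w m b n : ℝ) / n < c / 2 :=
      hc.eventually (eventually_lt_nhds (by linarith))
    filter_upwards [hev, eventually_gt_atTop 0] with n hn hn0
    have hnp : (0:ℝ) < n := by exact_mod_cast hn0
    calc (w m b n : ℝ) = ((w m b n : ℝ) / n) * n := by field_simp
    _ ≤ (c/2) * n := by nlinarith
    _ = n * (c/2) := by ring
  have h2 : Tendsto (fun n : ℕ => (n : ℝ) * (c / 2)) atTop atBot :=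
    Tendsto.atTop_mul_const_of_neg (by linarith) tendsto_natCast_atTop_atTop
  exact tendsto_atBot_mono' atTop h1 h2

lemma recCount_tendsto {m : ℕ} {b : ℕ → Bool} {c : ℝ}
    (hc : Tendsto (fun n => (w m b n : ℝ) / n) atTop (𝓝 c)) (hc0 : c < 0) :
    Tendsto (fun N => (recCount m b N : ℝ) / N) atTop (𝓝 (-c)) := by
  have hbot := w_tendsto_atBot hc hc0
  set g : ℕ → ℕ := fun N => Classical.choose (exists_future_max hbot N) with hg
  have hgs : ∀ N, N ≤ g N ∧ ∀ j, N ≤ j → w m b j ≤ w m b (g N) :=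
    fun N => Classical.choose_spec (exists_future_max hbot N)
  have hGmax : ∀ j, w m b j ≤ w m b (g 0) := fun j => (hgs 0).2 j (Nat.zero_le j)
  have hident : ∀ N, (recCount m b N : ℝ) = (w m b (g 0) : ℝ) - (w m b (g N) : ℝ) := by
    intro N
    have := recCount_eq N (g 0) (g N) hGmax (hgs N).1 (hgs N).2
    exact_mod_cast this
  -- the future max over [N, ∞), divided by N, tends to c
  have hkey : Tendsto (fun N : ℕ => (w m b (g N) : ℝ) / N) atTop (𝓝 c) := by
    rw [Metric.tendsto_atTop]
    intro ε hε
    set ε' : ℝ := min (ε / 2) (-c / 2) with hε'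
    have hε'pos : 0 < ε' := by
      apply lt_min (by linarith) (by linarith)
    obtain ⟨N₀, hN₀⟩ := (Metric.tendsto_atTop.mp hc ε' hε'pos)
    refine ⟨max N₀ 1, fun N hN => ?_⟩
    have hN1 : 1 ≤ N := le_trans (le_max_right _ _) hN
    have hN0 : N₀ ≤ N := le_trans (le_max_left _ _) hN
    have hNpos : (0:ℝ) < N := by exact_mod_cast hN1
    have hgN : N ≤ g N := (hgs N).1
    have hgNpos : (0:ℝ) < (g N : ℝ) := lt_of_lt_of_le hNpos (by exact_mod_cast hgN)
    have hcast : (N : ℝ) ≤ (g N : ℝ) := by exact_mod_cast hgN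
    -- upper bound
    have hup : (w m b (g N) : ℝ) / N < c + ε' := by
      have h3 := hN₀ (g N) (le_trans hN0 hgN)
      rw [Real.dist_eq, abs_lt] at h3
      have h4 : (w m b (g N) : ℝ) < (g N : ℝ) * (c + ε') := by
        have := h3.2
        calc (w m b (g N) : ℝ) = ((w m b (g N) : ℝ) / (g N)) * (g N) := by field_simp
        _ < (c + ε') * (g N) := by nlinarith
        _ = (g N : ℝ) * (c + ε') := by ring
      have h5 : (c + ε') ≤ 0 := by
        have : ε' ≤ -c / 2 := min_le_right _ _
        linarith
      have h6 : (g N : ℝ) * (c + ε') ≤ (N : ℝ) * (c + ε') := by nlinarith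
      rw [div_lt_iff₀ hNpos]
      calc (w m b (g N) : ℝ) < (g N : ℝ) * (c + ε') := h4
      _ ≤ (N : ℝ) * (c + ε') := h6
      _ = (c + ε') * N := by ring
    -- lower bound
    have hlo : c - ε' < (w m b (g N) : ℝ) / N := by
      have h3 := hN₀ N hN0
      rw [Real.dist_eq, abs_lt] at h3
      have h4 : (N : ℝ) * (c - ε') < (w m b N : ℝ) := by
        have := h3.1
        calc (N:ℝ) * (c - ε') < ((w m b N : ℝ) / N) * N := by nlinarith
        _ = (w m b N : ℝ) := by field_simp
      have h5 : (w m b N : ℝ) ≤ (w m b (g N) : ℝ) := by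
        exact_mod_cast (hgs N).2 N le_rfl
      rw [lt_div_iff₀ hNpos]
      nlinarith
    rw [Real.dist_eq, abs_lt]
    constructor
    · have : ε' ≤ ε / 2 := min_le_left _ _
      linarith
    · have : ε' ≤ ε / 2 := min_le_left _ _
      linarith
  have h0 : Tendsto (fun N : ℕ => (w m b (g 0) : ℝ) / N) atTop (𝓝 0) :=
    tendsto_const_div_atTop_nhds_zero_nat _
  have := h0.sub hkey
  rw [zero_sub] at this
  apply this.congr'
  filter_upwards with N
  rw [hident N, sub_div]

lemma measurableSet_pcyl (n : ℕ) (g : ℕ → Bool) : MeasurableSet (pcyl n g) := by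
  have h : pcyl n g = ⋂ i ∈ Finset.range n, (fun b : ℕ → Bool => b i) ⁻¹' {g i} := by
    ext b
    simp [pcyl]
  rw [h]
  exact MeasurableSet.biInter (Finset.range n).countable_toSet
    (fun i _ => measurable_pi_apply i (measurableSet_singleton _))

lemma isPiSystem_pcylSys : IsPiSystem pcylSys := by
  rintro A ⟨n, g, rfl⟩ B ⟨n', g', rfl⟩ hne
  obtain ⟨b, hb1, hb2⟩ := hne
  rcases le_total n n' with h | h
  · refine ⟨n', g', ?_⟩
    ext x
    simp only [Set.mem_inter_iff, pcyl, Set.mem_setOf_eq]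
    constructor
    · rintro ⟨_, h2⟩; exact h2
    · intro hx
      refine ⟨fun i hi => ?_, hx⟩
      rw [hx i (by omega)]
      rw [← hb2 i (by omega), hb1 i hi]
  · refine ⟨n, g, ?_⟩
    ext x
    simp only [Set.mem_inter_iff, pcyl, Set.mem_setOf_eq]
    constructor
    · rintro ⟨h2, _⟩; exact h2
    · intro hx
      refine ⟨hx, fun i hi => ?_⟩
      rw [hx i (by omega)]
      rw [← hb1 i (by omega), hb2 i hi]

lemma eval_true_mem (i : ℕ) :
    MeasurableSet[MeasurableSpace.generateFrom pcylSys] {b : ℕ → Bool | b i = true} := by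
  have h : {b : ℕ → Bool | b i = true}
      = ⋃ v : {v : Fin (i+1) → Bool // v ⟨i, Nat.lt_succ_self i⟩ = true},
          pcyl (i+1) (fun j => if h : j < i + 1 then (v : Fin (i+1) → Bool) ⟨j, h⟩ else false) := by
    ext b
    simp only [Set.mem_setOf_eq, Set.mem_iUnion]
    constructor
    · intro hb
      refine ⟨⟨fun j => b j, hb⟩, ?_⟩
      intro j hj
      simp [hj]
    · rintro ⟨⟨v, hv⟩, hb⟩
      have := hb i (Nat.lt_succ_self i)
      simp only [Nat.lt_succ_self, dif_pos] at this
      rw [this]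
      exact hv
  rw [h]
  exact MeasurableSet.iUnion fun v =>
    MeasurableSpace.measurableSet_generateFrom ⟨i+1, _, rfl⟩

lemma generateFrom_pcylSys :
    (MeasurableSpace.pi : MeasurableSpace (ℕ → Bool)) = MeasurableSpace.generateFrom pcylSys := by
  apply le_antisymm
  · have h : ∀ i : ℕ, Measurable[MeasurableSpace.generateFrom pcylSys]
        (fun b : ℕ → Bool => b i) := by
      intro i
      apply @measurable_to_countable' Bool (ℕ → Bool) _ _ (MeasurableSpace.generateFrom pcylSys)
      intro y
      cases y
      · have hc : (fun b : ℕ → Bool => b i) ⁻¹' {false}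
            = {b : ℕ → Bool | b i = true}ᶜ := by
          ext b; simp
        rw [hc]
        exact (eval_true_mem i).compl
      · exact eval_true_mem i
    rw [MeasurableSpace.pi]  -- may fail; alternative below
    exact iSup_le fun i => MeasurableSpace.comap_le_iff_le_map.mpr
      fun s hs => (h i) hs
  · rw [MeasurableSpace.generateFrom_le_iff]
    rintro A ⟨n, g, rfl⟩
    exact measurableSet_pcyl n g

lemma measurable_cnt (n : ℕ) : Measurable (fun b : ℕ → Bool => cnt b n) := by
  apply Finset.measurable_sum
  intro i _
  have h1 : Measurable (fun b : ℕ → Bool => b i) := measurable_pi_apply i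
  exact Measurable.comp (Measurable.of_discrete (f := (fun x : Bool => if x then (1:ℕ) else 0))) h1

lemma measurable_w (m n : ℕ) : Measurable (fun b : ℕ → Bool => w m b n) := by
  unfold w
  apply Measurable.sub _ measurable_const
  exact (measurable_const.mul ((Measurable.of_discrete (f := fun x : ℕ => (x : ℤ))).comp (measurable_cnt n)))

lemma measurableSet_w_le (m n : ℕ) (c : ℤ) : MeasurableSet {b : ℕ → Bool | w m b n ≤ c} :=
  measurable_w m n measurableSet_Iic

lemma measurableSet_BadSet (m : ℕ) : MeasurableSet (BadSet m) := by
  have h : BadSet m = ⋂ n, ⋂ (_ : 1 ≤ n), {b : ℕ → Bool | w m b n ≤ 0} := by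
    ext b; simp [BadSet]
  rw [h]
  exact MeasurableSet.iInter fun n => MeasurableSet.iInter fun _ => measurableSet_w_le m n 0

lemma measurableSet_NegSet (m : ℕ) : MeasurableSet (NegSet m) := by
  have h : NegSet m = ⋂ n, ⋂ (_ : 1 ≤ n), {b : ℕ → Bool | w m b n ≤ -1} := by
    ext b
    simp only [NegSet, Set.mem_setOf_eq, Set.mem_iInter]
    constructor
    · intro h n hn; have := h n hn; omega
    · intro h n hn; have := h n hn; omega
  rw [h]
  exact MeasurableSet.iInter fun n => MeasurableSet.iInter fun _ => measurableSet_w_le m n (-1)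

variable {Ω : Type*} [MeasurableSpace Ω] (P : Measure Ω) [IsProbabilityMeasure P]
  (p : ℝ) (B : ℕ → Ω → Bool) (hmeas : ∀ n, Measurable (B n))
  (hindep : iIndepFun B P)
  (hB : ∀ n, P {ω | B n ω = true} = ENNReal.ofReal p)

def Φ (B : ℕ → Ω → Bool) (k : ℕ) : Ω → (ℕ → Bool) := fun ω i => B (k + i) ω

set_option linter.unusedSectionVars false

include hmeas in
lemma measurable_Φ (k : ℕ) : Measurable (Φ B k) :=
  measurable_pi_lambda _ (fun i => hmeas (k + i))

section
include hmeas hB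

lemma prob_false (j : ℕ) : P {ω | B j ω = false} = 1 - ENNReal.ofReal p := by
  have h : {ω | B j ω = false} = {ω | B j ω = true}ᶜ := by
    ext ω; simp
  have hms : MeasurableSet {ω | B j ω = true} := (hmeas j) (measurableSet_singleton true)
  rw [h, measure_compl hms (measure_ne_top P _), hB j, measure_univ]

include hindep

lemma prob_pcyl (k n : ℕ) (g : ℕ → Bool) :
    P (Φ B k ⁻¹' pcyl n g)
      = ∏ i ∈ Finset.range n, (if g i then ENNReal.ofReal p else 1 - ENNReal.ofReal p) := by
  have hrw : Φ B k ⁻¹' pcyl n g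
      = ⋂ j ∈ (Finset.range n).image (k + ·), B j ⁻¹' {g (j - k)} := by
    ext ω
    simp only [Set.mem_preimage, pcyl, Set.mem_setOf_eq, Set.mem_iInter, Finset.mem_image,
      Finset.mem_range, Set.mem_singleton_iff, Φ]
    constructor
    · rintro h j ⟨i, hi, rfl⟩
      rw [Nat.add_sub_cancel_left]
      exact h i hi
    · intro h i hi
      have := h (k + i) ⟨i, hi, rfl⟩
      rwa [Nat.add_sub_cancel_left] at this
  rw [hrw]
  rw [(iIndepFun_iff_measure_inter_preimage_eq_mul.mp hindep) _
    (fun j _ => (measurableSet_singleton _))]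
  rw [Finset.prod_image (by intro a _ b _ h; simp only at h; omega)]
  apply Finset.prod_congr rfl
  intro i _
  rw [Nat.add_sub_cancel_left]
  cases hgi : g i
  · have h2 : B (k + i) ⁻¹' {false} = {ω | B (k + i) ω = false} := rfl
    rw [h2, prob_false P p B hmeas hB]
    simp
  · have h2 : B (k + i) ⁻¹' {true} = {ω | B (k + i) ω = true} := rfl
    rw [h2, hB]
    simp

lemma map_shift_eq (k : ℕ) :
    Measure.map (Φ B k) P = Measure.map (Φ B 0) P := by
  have h1 : IsProbabilityMeasure (Measure.map (Φ B k) P) :=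
    Measure.isProbabilityMeasure_map (measurable_Φ B hmeas k).aemeasurable
  have h2 : IsProbabilityMeasure (Measure.map (Φ B 0) P) :=
    Measure.isProbabilityMeasure_map (measurable_Φ B hmeas 0).aemeasurable
  refine ext_of_generate_finite pcylSys generateFrom_pcylSys isPiSystem_pcylSys ?_ ?_
  · rintro A ⟨n, g, rfl⟩
    rw [Measure.map_apply (measurable_Φ B hmeas k) (measurableSet_pcyl n g),
      Measure.map_apply (measurable_Φ B hmeas 0) (measurableSet_pcyl n g),
      prob_pcyl P p B hmeas hindep hB k n g, prob_pcyl P p B hmeas hindep hB 0 n g]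
  · rw [measure_univ, measure_univ]

lemma prob_shift_eq (k : ℕ) {E : Set (ℕ → Bool)} (hE : MeasurableSet E) :
    P (Φ B k ⁻¹' E) = P (Φ B 0 ⁻¹' E) := by
  rw [← Measure.map_apply (measurable_Φ B hmeas k) hE,
    ← Measure.map_apply (measurable_Φ B hmeas 0) hE,
    map_shift_eq P p B hmeas hindep hB k]

end

section
include hmeas hB

lemma identDistrib_B (i : ℕ) : IdentDistrib (B i) (B 0) P P := by
  refine ⟨(hmeas i).aemeasurable, (hmeas 0).aemeasurable, ?_⟩
  ext s hs
  rw [Measure.map_apply (hmeas i) hs, Measure.map_apply (hmeas 0) hs]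
  by_cases ht : true ∈ s <;> by_cases hf : false ∈ s
  · have hs' : s = Set.univ := by
      ext x; cases x <;> simp [ht, hf]
    rw [hs', Set.preimage_univ, Set.preimage_univ]
  · have hs' : s = {true} := by
      ext x; cases x <;> simp [ht, hf]
    subst hs'
    show P {ω | B i ω = true} = P {ω | B 0 ω = true}
    rw [hB i, hB 0]
  · have hs' : s = {false} := by
      ext x; cases x <;> simp [ht, hf]
    subst hs'
    show P {ω | B i ω = false} = P {ω | B 0 ω = false}
    rw [prob_false P p B hmeas hB i, prob_false P p B hmeas hB 0]
  · have hs' : s = ∅ := by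
      ext x; cases x <;> simp [ht, hf]
    rw [hs']; simp

include hindep

lemma ae_tendsto_cnt (hp0 : 0 ≤ p) (hp1 : p ≤ 1) :
    ∀ᵐ ω ∂P, Tendsto (fun n : ℕ => ((cnt (Φ B 0 ω) n : ℝ)) / n) atTop (𝓝 p) := by
  set X : ℕ → Ω → ℝ := fun i ω => if B i ω then 1 else 0 with hX
  have hφ : Measurable (fun x : Bool => if x then (1:ℝ) else 0) := Measurable.of_discrete
  have hXmeas : ∀ i, Measurable (X i) := fun i => hφ.comp (hmeas i)
  have hint : Integrable (X 0) P := by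
    refine (integrable_const (1:ℝ)).mono' (hXmeas 0).aestronglyMeasurable ?_
    filter_upwards with ω
    simp only [hX]
    split <;> simp
  have hpind : Pairwise (Function.onFun (fun f g => IndepFun f g P) X) := by
    intro i j hij
    exact (hindep.indepFun hij).comp hφ hφ
  have hident : ∀ i, IdentDistrib (X i) (X 0) P P := by
    intro i
    exact (identDistrib_B P p B hmeas hB i).comp hφ
  have hmean : P[X 0] = p := by
    have hrw : X 0 = Set.indicator {ω | B 0 ω = true} (fun _ => (1:ℝ)) := by
      funext ω
      by_cases h : B 0 ω = true <;> simp [hX, Set.indicator_apply, h]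
    have hms : MeasurableSet {ω | B 0 ω = true} := (hmeas 0) (measurableSet_singleton true)
    rw [hrw, integral_indicator_const _ hms, measureReal_def, hB 0]
    simp [ENNReal.toReal_ofReal hp0]
  have hslln := strong_law_ae X hint hpind hident
  rw [hmean] at hslln
  filter_upwards [hslln] with ω hω
  have hcast : ∀ n : ℕ, ((cnt (Φ B 0 ω) n : ℝ)) = ∑ i ∈ Finset.range n, X i ω := by
    intro n
    simp only [cnt, hX, Φ, Nat.zero_add]
    push_cast
    apply Finset.sum_congr rfl
    intro i _
    split <;> simp
  apply hω.congr
  intro n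
  rw [hcast n, smul_eq_mul, inv_mul_eq_div]

lemma ae_tendsto_w (m : ℕ) (hp0 : 0 ≤ p) (hp1 : p ≤ 1) :
    ∀ᵐ ω ∂P, Tendsto (fun n : ℕ => ((w m (Φ B 0 ω) n : ℝ)) / n) atTop (𝓝 ((m : ℝ) * p - 1)) := by
  filter_upwards [ae_tendsto_cnt P p B hmeas hindep hB hp0 hp1] with ω hω
  have h2 : Tendsto (fun n : ℕ => (m : ℝ) * ((cnt (Φ B 0 ω) n : ℝ) / n) - 1) atTop
      (𝓝 ((m : ℝ) * p - 1)) := (hω.const_mul (m : ℝ)).sub_const 1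
  apply h2.congr'
  filter_upwards [eventually_ge_atTop 1] with n hn
  have hn0 : (n : ℝ) ≠ 0 := by positivity
  simp only [w]
  push_cast
  rw [sub_div, mul_div_assoc, div_self hn0]

end

section
include hmeas hindep hB

lemma shift_phi (k : ℕ) (ω : Ω) : shiftSeq k (Φ B 0 ω) = Φ B k ω := by
  funext i
  simp [shiftSeq, Φ]

lemma rec_event_eq (m k : ℕ) :
    {ω | Rec m (Φ B 0 ω) k} = Φ B k ⁻¹' NegSet m := by
  ext ω
  rw [Set.mem_setOf_eq, rec_iff_neg, shift_phi P p B hmeas hindep hB]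
  rfl

/-- the probability that the walk stays strictly negative -/
lemma alpha_eq (m : ℕ) (hm : 1 ≤ m) (hp0 : 0 ≤ p) (hpβ : p < (m : ℝ)⁻¹) :
    (P (Φ B 0 ⁻¹' NegSet m)).toReal = 1 - (m : ℝ) * p := by
  have hmpos : (0:ℝ) < m := by exact_mod_cast hm
  have hp1 : p ≤ 1 := le_of_lt (lt_of_lt_of_le hpβ (by
    rw [inv_le_one_iff₀]; right; exact_mod_cast hm))
  have hmp1 : (m:ℝ) * p < 1 := by
    have := (mul_lt_mul_of_pos_left hpβ hmpos)
    rwa [mul_inv_cancel₀ (ne_of_gt hmpos)] at this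
  set α := P (Φ B 0 ⁻¹' NegSet m) with hα
  set F : ℕ → Ω → ℝ := fun N ω =>
    (N : ℝ)⁻¹ * ∑ k ∈ Finset.range N, Set.indicator (Φ B k ⁻¹' NegSet m) (fun _ => (1:ℝ)) ω
    with hF
  have hmF : ∀ k, MeasurableSet (Φ B k ⁻¹' NegSet m) :=
    fun k => (measurable_Φ B hmeas k) (measurableSet_NegSet m)
  -- each F N has integral α.toReal for N ≥ 1
  have hint : ∀ N, 1 ≤ N → ∫ ω, F N ω ∂P = α.toReal := by
    intro N hN
    have hInteg : ∀ k, Integrable (Set.indicator (Φ B k ⁻¹' NegSet m) (fun _ => (1:ℝ))) P :=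
      fun k => (integrable_const (1:ℝ)).indicator (hmF k)
    simp only [hF]
    rw [integral_const_mul, integral_finset_sum _ (fun k _ => hInteg k)]
    have heach : ∀ k, ∫ ω, Set.indicator (Φ B k ⁻¹' NegSet m) (fun _ => (1:ℝ)) ω ∂P
        = α.toReal := by
      intro k
      rw [integral_indicator_const _ (hmF k), measureReal_def,
        prob_shift_eq P p B hmeas hindep hB k (measurableSet_NegSet m)]
      simp
      rfl
    rw [Finset.sum_congr rfl (fun k _ => heach k), Finset.sum_const, Finset.card_range,
      nsmul_eq_mul]
    rw [← mul_assoc, inv_mul_cancel₀ (by positivity : (N:ℝ) ≠ 0), one_mul]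
  -- F N converges a.e. to 1 - m p
  have hlim : ∀ᵐ ω ∂P, Tendsto (fun N => F N ω) atTop (𝓝 (1 - (m:ℝ) * p)) := by
    filter_upwards [ae_tendsto_w P p B hmeas hindep hB m hp0 hp1] with ω hω
    have hc0 : (m : ℝ) * p - 1 < 0 := by linarith
    have hrec := recCount_tendsto hω hc0
    have hneg : -((m:ℝ) * p - 1) = 1 - (m:ℝ) * p := by ring
    rw [hneg] at hrec
    apply hrec.congr
    intro N
    simp only [hF]
    have hcard : ((recCount m (Φ B 0 ω) N : ℝ))
        = ∑ k ∈ Finset.range N, Set.indicator (Φ B k ⁻¹' NegSet m) (fun _ => (1:ℝ)) ω := by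
      rw [recCount, Finset.card_filter]
      push_cast
      apply Finset.sum_congr rfl
      intro k _
      rw [Set.indicator_apply]
      have hiff : ω ∈ Φ B k ⁻¹' NegSet m ↔ Rec m (Φ B 0 ω) k := by
        rw [← rec_event_eq P p B hmeas hindep hB m k]; rfl
      by_cases h : Rec m (Φ B 0 ω) k
      · rw [if_pos h, if_pos (hiff.mpr h)]
      · rw [if_neg h, if_neg (fun hc => h (hiff.mp hc))]
    rw [hcard, div_eq_inv_mul]
  -- dominated convergence
  have hFmeas : ∀ N, AEStronglyMeasurable (F N) P := by
    intro N
    apply Measurable.aestronglyMeasurable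
    apply Measurable.const_mul
    apply Finset.measurable_sum
    intro k _
    exact measurable_const.indicator (hmF k)
  have h01 : ∀ N (ω : Ω), 0 ≤ F N ω ∧ F N ω ≤ 1 := by
    intro N ω
    have hterm : ∀ k, 0 ≤ Set.indicator (Φ B k ⁻¹' NegSet m) (fun _ => (1:ℝ)) ω ∧
        Set.indicator (Φ B k ⁻¹' NegSet m) (fun _ => (1:ℝ)) ω ≤ 1 := by
      intro k
      rw [Set.indicator_apply]
      split <;> norm_num
    have hsum0 : 0 ≤ ∑ k ∈ Finset.range N,
        Set.indicator (Φ B k ⁻¹' NegSet m) (fun _ => (1:ℝ)) ω :=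
      Finset.sum_nonneg fun k _ => (hterm k).1
    have hsum1 : ∑ k ∈ Finset.range N,
        Set.indicator (Φ B k ⁻¹' NegSet m) (fun _ => (1:ℝ)) ω ≤ N := by
      calc _ ≤ ∑ _k ∈ Finset.range N, (1:ℝ) := Finset.sum_le_sum fun k _ => (hterm k).2
      _ = N := by simp
    constructor
    · simp only [hF]; positivity
    · simp only [hF]
      rcases Nat.eq_zero_or_pos N with h | h
      · subst h; simp
      · have hNpos : (0:ℝ) < N := by exact_mod_cast h
        calc (N:ℝ)⁻¹ * _ ≤ (N:ℝ)⁻¹ * N := by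
              apply mul_le_mul_of_nonneg_left hsum1 (by positivity)
        _ = 1 := inv_mul_cancel₀ (ne_of_gt hNpos)
  have hdom := tendsto_integral_of_dominated_convergence (fun _ => (1:ℝ)) hFmeas
    (integrable_const 1)
    (fun N => ae_of_all _ fun ω => by
      rw [Real.norm_eq_abs, abs_of_nonneg (h01 N ω).1]; exact (h01 N ω).2)
    hlim
  have hconst : ∫ _ω, (1 - (m:ℝ) * p) ∂P = 1 - (m:ℝ) * p := by
    rw [integral_const]; simp
  rw [hconst] at hdom
  have h2 : Tendsto (fun N => ∫ ω, F N ω ∂P) atTop (𝓝 α.toReal) := by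
    apply tendsto_const_nhds.congr'
    filter_upwards [eventually_ge_atTop 1] with N hN
    exact (hint N hN).symm
  exact (tendsto_nhds_unique h2 hdom)

lemma neg_split (m : ℕ) (hm : 1 ≤ m) :
    P (Φ B 0 ⁻¹' NegSet m) = (1 - ENNReal.ofReal p) * P (Φ B 0 ⁻¹' BadSet m) := by
  have hseteq : Φ B 0 ⁻¹' NegSet m = {ω | B 0 ω = false} ∩ Φ B 1 ⁻¹' BadSet m := by
    ext ω
    rw [Set.mem_preimage, neg_iff m hm, shift_phi P p B hmeas hindep hB 1]
    exact Iff.rfl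
  have h_le : ∀ i, MeasurableSpace.comap (B i) inferInstance ≤ ‹MeasurableSpace Ω› :=
    fun i => (hmeas i).comap_le
  have hInd := indep_biSup_compl h_le hindep ({0} : Set ℕ)
  have hm1 : MeasurableSet[⨆ i ∈ ({0} : Set ℕ), MeasurableSpace.comap (B i) inferInstance]
      {ω | B 0 ω = false} := by
    have hle0 := le_biSup (fun i => MeasurableSpace.comap (B i) inferInstance)
      (show (0:ℕ) ∈ ({0} : Set ℕ) from rfl)
    exact hle0 _ ⟨{false}, trivial, rfl⟩
  have hm2 : MeasurableSet[⨆ i ∈ (({0} : Set ℕ))ᶜ, MeasurableSpace.comap (B i) inferInstance]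
      (Φ B 1 ⁻¹' BadSet m) := by
    have hΦm : Measurable[⨆ i ∈ (({0} : Set ℕ))ᶜ, MeasurableSpace.comap (B i) inferInstance]
        (Φ B 1) :=
      (@measurable_pi_iff Ω ℕ (fun _ => Bool)
        (⨆ i ∈ (({0} : Set ℕ))ᶜ, MeasurableSpace.comap (B i) inferInstance) _ (Φ B 1)).mpr
        (fun i => Measurable.of_comap_le
          (le_biSup (fun j => MeasurableSpace.comap (B j) inferInstance)
            (show (1 + i) ∈ (({0} : Set ℕ))ᶜ by simp)))
    exact hΦm (measurableSet_BadSet m)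
  have hprod := (Indep.indepSet_of_measurableSet hInd hm1 hm2).measure_inter_eq_mul
  rw [hseteq, hprod, prob_false P p B hmeas hB 0,
    prob_shift_eq P p B hmeas hindep hB 1 (measurableSet_BadSet m)]

end

include hmeas in
lemma cond_iff (m : ℕ) (hm : 0 < m) (ω : Ω) (n : ℕ) :
    ((m : ℝ)⁻¹ * n < ∑ i ∈ Finset.range n, (if B i ω = true then (1 : ℝ) else 0))
      ↔ 0 < w m (Φ B 0 ω) n := by
  have hs : ∑ i ∈ Finset.range n, (if B i ω = true then (1 : ℝ) else 0)
      = ((cnt (Φ B 0 ω) n : ℕ) : ℝ) := by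
    simp only [cnt, Φ, Nat.zero_add]
    push_cast
    refine Finset.sum_congr rfl fun i _ => ?_
    split <;> simp
  rw [hs, inv_mul_lt_iff₀ (by exact_mod_cast hm : (0:ℝ) < (m:ℝ))]
  constructor
  · intro h
    have h2 : (n : ℤ) < (m : ℤ) * (cnt (Φ B 0 ω) n : ℤ) := by exact_mod_cast h
    simp only [w]
    omega
  · intro h
    simp only [w] at h
    have h2 : (n : ℤ) < (m : ℤ) * (cnt (Φ B 0 ω) n : ℤ) := by omega
    exact_mod_cast h2

end
end Stmt9

/-- for β = 1/m and i.i.d. Bernoulli(p) coins with p < β, the probability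
that the running average ever exceeds β equals p(m-1)/(1-p). -/
theorem stmt_9 {Ω : Type*} [MeasurableSpace Ω] (P : Measure Ω) [IsProbabilityMeasure P]
    (m : ℕ) (hm : 2 ≤ m) (p : ℝ) (hp0 : 0 ≤ p) (hpβ : p < (m : ℝ)⁻¹)
    (B : ℕ → Ω → Bool) (hmeas : ∀ n, Measurable (B n))
    (hindep : iIndepFun B P)
    (hB : ∀ n, P {ω | B n ω = true} = ENNReal.ofReal p) :
    P {ω | ∃ n, 1 ≤ n ∧
        (m : ℝ)⁻¹ * n < ∑ i ∈ Finset.range n, (if B i ω = true then (1 : ℝ) else 0)}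
      = ENNReal.ofReal (p * (m - 1) / (1 - p)) := by
  classical
  have hm1 : 1 ≤ m := by omega
  have hmpos : (0:ℝ) < m := by
    have : (2:ℝ) ≤ m := by exact_mod_cast hm
    linarith
  have hminv : (m : ℝ)⁻¹ ≤ 1 := by
    rw [inv_le_one_iff₀]
    right
    have : (2:ℝ) ≤ m := by exact_mod_cast hm
    linarith
  have hp1 : p < 1 := lt_of_lt_of_le hpβ hminv
  have hmp1 : (m:ℝ) * p < 1 := by
    have := mul_lt_mul_of_pos_left hpβ hmpos
    rwa [mul_inv_cancel₀ (ne_of_gt hmpos)] at this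
  set Bad : Set Ω := Stmt9.Φ B 0 ⁻¹' Stmt9.BadSet m with hBadDef
  have hmBad : MeasurableSet Bad :=
    (Stmt9.measurable_Φ B hmeas 0) (Stmt9.measurableSet_BadSet m)
  -- identify the target event with the complement of Bad
  have hTeq : {ω | ∃ n, 1 ≤ n ∧
      (m : ℝ)⁻¹ * n < ∑ i ∈ Finset.range n, (if B i ω = true then (1 : ℝ) else 0)}
      = Badᶜ := by
    ext ω
    simp only [Set.mem_setOf_eq, Set.mem_compl_iff, hBadDef, Set.mem_preimage, Stmt9.BadSet,
      Set.mem_setOf_eq]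
    constructor
    · rintro ⟨n, hn, hlt⟩ hall
      have h1 := (Stmt9.cond_iff B hmeas m (by omega) ω n).mp hlt
      have h2 := hall n hn
      omega
    · intro h
      push_neg at h
      obtain ⟨n, hn, hw⟩ := h
      exact ⟨n, hn, (Stmt9.cond_iff B hmeas m (by omega) ω n).mpr (by omega)⟩
  rw [hTeq]
  -- probabilities
  have hα := Stmt9.alpha_eq P p B hmeas hindep hB m hm1 hp0 hpβ
  have hsplit := Stmt9.neg_split P p B hmeas hindep hB m hm1
  set α : ENNReal := P (Stmt9.Φ B 0 ⁻¹' Stmt9.NegSet m) with hαDef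
  set β : ENNReal := P Bad with hβDef
  have hβ1 : β ≤ 1 := prob_le_one
  have hofp_le : ENNReal.ofReal p ≤ 1 := ENNReal.ofReal_le_one.mpr (le_of_lt hp1)
  have h1p : (1 - ENNReal.ofReal p).toReal = 1 - p := by
    rw [ENNReal.toReal_sub_of_le hofp_le (by simp), ENNReal.toReal_one,
      ENNReal.toReal_ofReal hp0]
  have htoReal : (1 - (m:ℝ) * p) = (1 - p) * β.toReal := by
    rw [← hα, hsplit, ENNReal.toReal_mul, h1p]
  have h1ppos : (0:ℝ) < 1 - p := by linarith
  have hβr : β.toReal = (1 - (m:ℝ) * p) / (1 - p) := by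
    rw [eq_div_iff (ne_of_gt h1ppos)]
    linear_combination -htoReal
  have hPT : P Badᶜ = 1 - β := by
    rw [measure_compl hmBad (measure_ne_top P Bad), measure_univ]
  have hPTr : (P Badᶜ).toReal = 1 - β.toReal := by
    rw [hPT, ENNReal.toReal_sub_of_le hβ1 (by simp), ENNReal.toReal_one]
  calc P Badᶜ = ENNReal.ofReal ((P Badᶜ).toReal) :=
        (ENNReal.ofReal_toReal (measure_ne_top P _)).symm
  _ = ENNReal.ofReal (p * (m - 1) / (1 - p)) := by
      have hreal : 1 - (1 - (m:ℝ)*p)/(1-p) = p * ((m:ℝ) - 1)/(1-p) := by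
        field_simp
        ring
      rw [hPTr, hβr, hreal]
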